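/- Let U be a finite index set of size m, and let a, b ∈ [0:2]^U satisfy a − b ∈ [-1:1]^U (i.e., |a_j − b_j| ≤ 1 for all j ∈ U). Suppose #a^{−1}(2) = #b^{−1}(2) = E and #a^{−1}(1) = #b^{−1}(1) = m/2 for integers E and m/2, and let s be an integer with E ≤ s ≤ m/2 + E. Then the number of pairs (L, R) of subsets of U with |L| = |R| = s such that a^{−1}(2) ⊆ L, b^{−1}(0) ∩ L = ∅, b^{−1}(2) ⊆ R, and a^{−1}(0) ∩ R = ∅ equals C(m/2, s − E)², where C(·,·) denotes the binomial coefficient. -/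
import Mathlib

lemma count_between {ι : Type*} [Fintype ι] [DecidableEq ι]
    (A B : Finset ι) (hAB : A ⊆ B) (s : ℕ) (hs : A.card ≤ s) :
    (Finset.univ.filter fun L : Finset ι => L.card = s ∧ A ⊆ L ∧ L ⊆ B).card
      = (B.card - A.card).choose (s - A.card) := by
  rw [← Finset.card_sdiff_of_subset hAB, ← Finset.card_powersetCard (s - A.card) (B \ A)]
  apply Finset.card_bij' (fun L _ => L \ A) (fun L' _ => L' ∪ A)
  · rintro L hL
    simp only [Finset.mem_filter, Finset.mem_univ, true_and] at hL
    obtain ⟨hcard, hAL, hLB⟩ := hL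
    rw [Finset.mem_powersetCard]
    refine ⟨Finset.sdiff_subset_sdiff hLB le_rfl, ?_⟩
    rw [Finset.card_sdiff_of_subset hAL, hcard]
  · rintro L' hL'
    simp only [Finset.mem_powersetCard] at hL'
    obtain ⟨hsub, hcard⟩ := hL'
    have hdisj : Disjoint L' A := by
      exact Finset.disjoint_of_subset_left hsub Finset.sdiff_disjoint
    simp only [Finset.mem_filter, Finset.mem_univ, true_and]
    refine ⟨?_, Finset.subset_union_right, ?_⟩
    · rw [Finset.card_union_of_disjoint hdisj, hcard, Nat.sub_add_cancel hs]
    · exact Finset.union_subset (hsub.trans (Finset.sdiff_subset)) hAB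
  · rintro L hL
    simp only [Finset.mem_filter, Finset.mem_univ, true_and] at hL
    exact Finset.sdiff_union_of_subset hL.2.1
  · rintro L' hL'
    simp only [Finset.mem_powersetCard] at hL'
    have hdisj : Disjoint L' A :=
      Finset.disjoint_of_subset_left hL'.1 Finset.sdiff_disjoint
    exact Finset.union_sdiff_cancel_right hdisj

/-- Number of joint certificates for a compatible pair (a, b): the number of
pairs (L, R) of s-element subsets with a⁻¹(2) ⊆ L, b⁻¹(0) ∩ L = ∅,
b⁻¹(2) ⊆ R, a⁻¹(0) ∩ R = ∅ equals C(m/2, s−E)². -/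
theorem stmt_10 (ι : Type*) [Fintype ι] [DecidableEq ι] (m E s : ℕ)
    (hm : Fintype.card ι = m) (hmeven : Even m)
    (a b : ι → ℤ)
    (ha : ∀ j, a j ∈ Finset.Icc (0 : ℤ) 2)
    (hb : ∀ j, b j ∈ Finset.Icc (0 : ℤ) 2)
    (hcompat : ∀ j, a j - b j ∈ Finset.Icc (-1 : ℤ) 1)
    (ha2 : (Finset.univ.filter fun j => a j = 2).card = E)
    (hb2 : (Finset.univ.filter fun j => b j = 2).card = E)
    (ha1 : (Finset.univ.filter fun j => a j = 1).card = m / 2)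
    (hb1 : (Finset.univ.filter fun j => b j = 1).card = m / 2)
    (hsE : E ≤ s) (hs : s ≤ m / 2 + E) :
    Set.ncard {LR : Finset ι × Finset ι |
        LR.1.card = s ∧ LR.2.card = s ∧
        (∀ j, a j = 2 → j ∈ LR.1) ∧ (∀ j ∈ LR.1, b j ≠ 0) ∧
        (∀ j, b j = 2 → j ∈ LR.2) ∧ (∀ j ∈ LR.2, a j ≠ 0)} =
      Nat.choose (m / 2) (s - E) ^ 2 := by
  classical
  set Aa : Finset ι := Finset.univ.filter fun j => a j = 2 with hAa
  set Ab : Finset ι := Finset.univ.filter fun j => b j = 2 with hAb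
  set Bb : Finset ι := Finset.univ.filter fun j => b j ≠ 0 with hBb
  set Ba : Finset ι := Finset.univ.filter fun j => a j ≠ 0 with hBa
  have hAaBb : Aa ⊆ Bb := by
    intro j hj
    simp only [hAa, hBb, Finset.mem_filter, Finset.mem_univ, true_and] at *
    have h1 := Finset.mem_Icc.mp (hcompat j)
    omega
  have hAbBa : Ab ⊆ Ba := by
    intro j hj
    simp only [hAb, hBa, Finset.mem_filter, Finset.mem_univ, true_and] at *
    have h1 := Finset.mem_Icc.mp (hcompat j)
    omega
  have hBbcard : Bb.card = m / 2 + E := by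
    have : Bb = (Finset.univ.filter fun j => b j = 1) ∪
        (Finset.univ.filter fun j => b j = 2) := by
      ext j
      have h1 := Finset.mem_Icc.mp (hb j)
      simp only [hBb, Finset.mem_filter, Finset.mem_univ, true_and,
        Finset.mem_union]
      omega
    rw [this, Finset.card_union_of_disjoint, hb1, hb2]
    rw [Finset.disjoint_filter]
    intro j _ h1
    omega
  have hBacard : Ba.card = m / 2 + E := by
    have : Ba = (Finset.univ.filter fun j => a j = 1) ∪
        (Finset.univ.filter fun j => a j = 2) := by
      ext j
      have h1 := Finset.mem_Icc.mp (ha j)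
      simp only [hBa, Finset.mem_filter, Finset.mem_univ, true_and,
        Finset.mem_union]
      omega
    rw [this, Finset.card_union_of_disjoint, ha1, ha2]
    rw [Finset.disjoint_filter]
    intro j _ h1
    omega
  have hAacard : Aa.card = E := ha2
  have hAbcard : Ab.card = E := hb2
  set SL : Finset (Finset ι) :=
    Finset.univ.filter fun L : Finset ι => L.card = s ∧ Aa ⊆ L ∧ L ⊆ Bb with hSL
  set SR : Finset (Finset ι) :=
    Finset.univ.filter fun L : Finset ι => L.card = s ∧ Ab ⊆ L ∧ L ⊆ Ba with hSR
  have hset : {LR : Finset ι × Finset ι |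
        LR.1.card = s ∧ LR.2.card = s ∧
        (∀ j, a j = 2 → j ∈ LR.1) ∧ (∀ j ∈ LR.1, b j ≠ 0) ∧
        (∀ j, b j = 2 → j ∈ LR.2) ∧ (∀ j ∈ LR.2, a j ≠ 0)} = ↑(SL ×ˢ SR) := by
    ext ⟨L, R⟩
    simp only [Set.mem_setOf_eq, Finset.coe_product, Set.mem_prod, hSL, hSR,
      Finset.mem_coe, Finset.mem_filter, Finset.mem_univ, true_and]
    constructor
    · rintro ⟨h1, h2, h3, h4, h5, h6⟩
      refine ⟨⟨h1, ?_, ?_⟩, h2, ?_, ?_⟩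
      · intro j hj
        simp only [hAa, Finset.mem_filter, Finset.mem_univ, true_and] at hj
        exact h3 j hj
      · intro j hj
        simp only [hBb, Finset.mem_filter, Finset.mem_univ, true_and]
        exact h4 j hj
      · intro j hj
        simp only [hAb, Finset.mem_filter, Finset.mem_univ, true_and] at hj
        exact h5 j hj
      · intro j hj
        simp only [hBa, Finset.mem_filter, Finset.mem_univ, true_and]
        exact h6 j hj
    · rintro ⟨⟨h1, h2, h3⟩, h4, h5, h6⟩
      refine ⟨h1, h4, ?_, ?_, ?_, ?_⟩
      · intro j hj
        exact h2 (by simp [hAa, hj])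
      · intro j hj
        have := h3 hj
        simpa [hBb] using this
      · intro j hj
        exact h5 (by simp [hAb, hj])
      · intro j hj
        have := h6 hj
        simpa [hBa] using this
  rw [hset, Set.ncard_coe_finset, Finset.card_product]
  have hEs : Aa.card ≤ s := by rw [hAacard]; exact hsE
  have hEs' : Ab.card ≤ s := by rw [hAbcard]; exact hsE
  rw [hSL, hSR, count_between Aa Bb hAaBb s hEs, count_between Ab Ba hAbBa s hEs',
    hAacard, hAbcard, hBbcard, hBacard, Nat.add_sub_cancel, sq]
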